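/- arXiv:1504.05172 — 4 statements merged into one kernel-verified Lean document; each statement's English description precedes it below -/
import Mathlib

section
/- The set {g ∈ H : |g|_Y ≤ 1} is infinite; in particular, the action of H on Y is not metrically proper. -/
open FreeGroup Filter

namespace PurelyLox

abbrev F : Type := FreeGroup (Fin 3)

def a : F := FreeGroup.of 0
def b : F := FreeGroup.of 1
def c : F := FreeGroup.of 2

/-- The subgroup generated by `a` and `b`. -/
def H : Subgroup F := Subgroup.closure {a, b}

/-- `g` is a positive word in the generators `a` and `b`. -/
def PosAB (g : F) : Prop :=
  ∀ x ∈ g.toWord, x.2 = true ∧ x.1 ≠ 2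

/-- A word is 7-aperiodic: it contains no subword `u^7` with `u` nonempty. -/
def Aperiodic7 {β : Type*} (w : List β) : Prop :=
  ¬ ∃ u : List β, u ≠ [] ∧ (List.flatten (List.replicate 7 u)) <:+: w

/-- The data of the fixed sequence `(v n)` of positive 7-aperiodic words in `a,b`,
with pairwise distinct lengths tending to infinity. -/
structure VSeq where
  v : ℕ → F
  pos : ∀ n, PosAB (v n)
  len_ne : ∀ m n, m ≠ n → ((v m).toWord.length ≠ (v n).toWord.length)
  len_tendsto : Tendsto (fun n => (v n).toWord.length) atTop atTop
  aperiodic : ∀ n, Aperiodic7 (v n).toWord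

/-- `w n = v n * c`. -/
def VSeq.w (V : VSeq) (n : ℕ) : F := V.v n * c

/-- `z` is a `W`-word: nontrivial, and its reduced word is a subword of
the reduced word of `(w n)^m` for some `n` and some `m ≠ 0`. -/
def VSeq.IsW (V : VSeq) (z : F) : Prop :=
  z ≠ 1 ∧ ∃ (n : ℕ) (m : ℤ), m ≠ 0 ∧ z.toWord <:+: ((V.w n) ^ m).toWord

/-- `|g|_Y`: the least `k` such that `g` is a product of `k` `W`-words. -/
noncomputable def VSeq.normY (V : VSeq) (g : F) : ℕ :=
  sInf {k | ∃ l : List F, l.length = k ∧ (∀ z ∈ l, V.IsW z) ∧ l.prod = g}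

/-- The vertex distance in the graph `Y`. -/
noncomputable def VSeq.dY (V : VSeq) (x y : F) : ℕ := V.normY (x⁻¹ * y)

/-- The product `u * v` is without cancellation. -/
def NoCancel (u v : F) : Prop := (u * v).toWord = u.toWord ++ v.toWord

/-- `p 0, p 1, …, p k` is a `d_Y`-geodesic from `x` to `y`. -/
def VSeq.IsGeodesic (V : VSeq) (x y : F) (k : ℕ) (p : ℕ → F) : Prop :=
  p 0 = x ∧ p k = y ∧ (∀ i < k, V.dY (p i) (p (i + 1)) = 1) ∧ k = V.dY x y

/-- `g` is cyclically reduced. -/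
def CyclicallyReduced (g : F) : Prop := (g * g).toWord = g.toWord ++ g.toWord

/-- `g` is root-free. -/
def RootFree (g : F) : Prop := ∀ (x : F) (s : ℤ), 2 ≤ |s| → g ≠ x ^ s


lemma reduce_eq_self_of_pos {α : Type*} [DecidableEq α] (L : List (α × Bool))
    (h : ∀ x ∈ L, x.2 = true) : FreeGroup.reduce L = L := by
  induction L with
  | nil => rfl
  | cons x L ih =>
    have hL : FreeGroup.reduce L = L := ih (fun y hy => h y (List.mem_cons_of_mem _ hy))
    rw [FreeGroup.reduce.cons, hL]
    cases L with
    | nil => rfl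
    | cons hd tl =>
      have hx : x.2 = true := h x List.mem_cons_self
      have hhd : hd.2 = true := h hd (by simp)
      simp [hx, hhd]

lemma mem_H_of_posAB (g : F) (hg : PosAB g) : g ∈ H := by
  have key : ∀ L : List (Fin 3 × Bool), (∀ x ∈ L, x.2 = true ∧ x.1 ≠ 2) →
      FreeGroup.mk L ∈ H := by
    intro L
    induction L with
    | nil => intro _; exact (one_mem H : FreeGroup.mk [] ∈ H)
    | cons x L ih =>
      intro h
      have hx := h x List.mem_cons_self
      have : FreeGroup.mk (x :: L) = FreeGroup.mk [x] * FreeGroup.mk L := by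
        rw [FreeGroup.mul_mk]; rfl
      rw [this]
      refine mul_mem ?_ (ih fun y hy => h y (List.mem_cons_of_mem _ hy))
      have hx2 : x.2 = true := hx.1
      have : FreeGroup.mk [x] = FreeGroup.of x.1 := by
        rw [FreeGroup.of]
        cases x with | mk i bb => simp at hx2; subst hx2; rfl
      rw [this]
      have h3 : x.1 ≠ 2 := hx.2
      have hi : x.1 = 0 ∨ x.1 = 1 := by
        have hlt := x.1.isLt
        simp only [Fin.ext_iff, ne_eq] at h3 ⊢
        omega
      rcases hi with h1 | h1
      · rw [h1]; exact Subgroup.subset_closure (Set.mem_insert _ _)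
      · rw [h1]; exact Subgroup.subset_closure (Set.mem_insert_of_mem _ rfl)
  have := key g.toWord hg
  rwa [FreeGroup.mk_toWord] at this

/-- The set `{g ∈ H : |g|_Y ≤ 1}` is infinite; in particular the
action of `H` on `Y` is not metrically proper. -/
theorem stmt7 (V : VSeq) :
    {g : F | g ∈ H ∧ V.normY g ≤ 1}.Infinite := by
  apply Set.infinite_of_injective_forall_mem (f := V.v)
  case hi =>
    intro m n hmn
    by_contra hne
    exact V.len_ne m n hne (by rw [hmn])
  case hf =>
    intro n
    refine ⟨mem_H_of_posAB _ (V.pos n), ?_⟩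
    -- normY (v n) ≤ 1
    by_cases h1 : V.v n = 1
    · have : (0 : ℕ) ∈ {k | ∃ l : List F, l.length = k ∧ (∀ z ∈ l, V.IsW z) ∧ l.prod = V.v n} :=
        ⟨[], rfl, by simp, by simp [h1]⟩
      exact le_trans (Nat.sInf_le this) (by norm_num)
    · have hw : (V.w n).toWord = (V.v n).toWord ++ [((2 : Fin 3), true)] := by
        have : V.w n = FreeGroup.mk ((V.v n).toWord ++ [((2 : Fin 3), true)]) := by
          rw [VSeq.w, ← FreeGroup.mul_mk, FreeGroup.mk_toWord]; rfl
        rw [this, FreeGroup.toWord_mk]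
        apply reduce_eq_self_of_pos
        intro x hx
        rcases List.mem_append.mp hx with hx | hx
        · exact ((V.pos n) x hx).1
        · simp at hx; rw [hx]
      have hW : V.IsW (V.v n) := by
        refine ⟨h1, n, 1, one_ne_zero, ?_⟩
        rw [zpow_one, hw]
        exact (List.prefix_append _ _).isInfix
      have : (1 : ℕ) ∈ {k | ∃ l : List F, l.length = k ∧ (∀ z ∈ l, V.IsW z) ∧ l.prod = V.v n} :=
        ⟨[V.v n], rfl, by simpa using hW, by simp⟩
      exact Nat.sInf_le this

end PurelyLox
end

section
/- There exists C ≥ 1 such that for every w ∈ F and every factorization w = u·v without cancellation (i.e., the reduced word of w is the concatenation of the reduced words of u and v), one has | |u|_Y + |v|_Y − |w|_Y | ≤ 2C. -/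
open FreeGroup Filter

namespace PurelyLox

/-! ### Auxiliary word-combinatorics lemmas -/

/-- non-cancelling adjacency of letters -/
def NC (p q : Fin 3 × Bool) : Prop := ¬(p.1 = q.1 ∧ p.2 = !q.2)

theorem reduce_eq_self_iff (L : List (Fin 3 × Bool)) :
    reduce L = L ↔ List.Chain' NC L := by
  induction L with
  | nil => simp [List.Chain']
  | cons x L ih =>
    constructor
    · intro h
      rw [reduce.cons] at h
      rcases hL : reduce L with _ | ⟨hd, tl⟩ <;> rw [hL] at h
      · simp only at h
        injection h with h1 h2
        subst h2; simp [List.Chain', List.isChain_singleton]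
      · simp only at h
        split_ifs at h with hc
        · exfalso
          have hsub : (reduce L).Sublist L := Red.sublist reduce.red
          have := hsub.length_le
          rw [hL] at this
          have h2 := congrArg List.length h
          simp at h2 this
          omega
        · injection h with h1 h2
          subst h2
          exact List.IsChain.cons_cons hc (ih.mp hL)
    · intro h
      have hL : reduce L = L := ih.mpr h.tail
      rw [reduce.cons, hL]
      rcases L with _ | ⟨hd, tl⟩
      · rfl
      · simp only
        rw [if_neg]
        exact (List.isChain_cons_cons.mp h).1

theorem invRev_append' (A B : List (Fin 3 × Bool)) :
    invRev (A ++ B) = invRev B ++ invRev A := by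
  simp [invRev]

theorem invRev_singleton' (x : Fin 3 × Bool) : invRev [x] = [(x.1, !x.2)] := by
  simp [invRev]

theorem invRev_infix {A B : List (Fin 3 × Bool)} (h : A <:+: B) :
    invRev A <:+: invRev B := by
  obtain ⟨s, t, rfl⟩ := h
  exact ⟨invRev t, invRev s, by rw [invRev_append', invRev_append', List.append_assoc]⟩

/-- The key word-level splitting lemma for products of reduced words. -/
theorem list_split : ∀ L1 : List (Fin 3 × Bool), reduce L1 = L1 →
    ∀ L2 : List (Fin 3 × Bool), reduce L2 = L2 →
    ∃ P Q R : List (Fin 3 × Bool),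
      L1 = P ++ Q ∧ L2 = invRev Q ++ R ∧ reduce (L1 ++ L2) = P ++ R := by
  intro L1
  induction L1 using List.reverseRecOn with
  | nil => exact fun _ L2 h2 => ⟨[], [], L2, rfl, by simp, by simpa⟩
  | append_singleton M x ih =>
    intro h1 L2 h2
    rcases L2 with _ | ⟨y, L2'⟩
    · exact ⟨M ++ [x], [], [], by simp, by simp, by simpa using h1⟩
    · by_cases hc : x.1 = y.1 ∧ x.2 = !y.2
      · have hy : y = (x.1, !x.2) := by
          obtain ⟨h1', h2'⟩ := hc
          cases y; cases x
          simp_all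
        subst hy
        obtain ⟨P, Q', R, hM, hL2', hred⟩ := ih
          ((reduce_eq_self_iff _).mpr ((List.isChain_append.mp ((reduce_eq_self_iff _).mp h1)).1))
          L2' ((reduce_eq_self_iff _).mpr (((reduce_eq_self_iff _).mp h2).tail))
        refine ⟨P, Q' ++ [x], R, by rw [hM]; simp, ?_, ?_⟩
        · rw [invRev_append', invRev_singleton', hL2']
          simp
        · have hstep : Red.Step (M ++ (x.1, x.2) :: (x.1, !x.2) :: L2') (M ++ L2') :=
            Red.Step.not
          have heq : (M ++ [x]) ++ (x.1, !x.2) :: L2' = M ++ (x.1, x.2) :: (x.1, !x.2) :: L2' := by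
            simp
          rw [heq, reduce.Step.eq hstep, hred]
      · refine ⟨M ++ [x], [], y :: L2', by simp, by simp, ?_⟩
        rw [(reduce_eq_self_iff _)]
        simp only [List.Chain']
        rw [List.isChain_append]
        refine ⟨(reduce_eq_self_iff _).mp h1, (reduce_eq_self_iff _).mp h2, ?_⟩
        intro p hp q hq
        simp at hp hq
        subst hp; subst hq
        exact hc

theorem toWord_mk_self {L : List (Fin 3 × Bool)} (h : reduce L = L) :
    (mk L : F).toWord = L := by rw [toWord_mk, h]

theorem isW_of_infix (V : VSeq) {z g : F} (hz : V.IsW z) (hg : g ≠ 1)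
    (h : g.toWord <:+: z.toWord) : V.IsW g := by
  obtain ⟨-, n, m, hm, hinf⟩ := hz
  exact ⟨hg, n, m, hm, h.trans hinf⟩

/-- Every letter (generator or inverse of a generator) is a `W`-word. -/
theorem letter_isW (V : VSeq) (i : Fin 3) (bb : Bool) : V.IsW (mk [(i, bb)]) := by
  obtain ⟨n, hn⟩ := (V.len_tendsto.eventually_ge_atTop 7).exists
  have hLred : reduce (V.v n).toWord = (V.v n).toWord := reduce_toWord _
  -- the reduced word of `w n`
  have hwn : (V.w n).toWord = (V.v n).toWord ++ [((2 : Fin 3), true)] := by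
    have hc : (c : F) = mk [((2 : Fin 3), true)] := by
      rw [show (c : F) = FreeGroup.of 2 from rfl, ← FreeGroup.toWord_of (2 : Fin 3), mk_toWord]
    have : (V.w n) = mk ((V.v n).toWord ++ [((2 : Fin 3), true)]) := by
      rw [show V.w n = V.v n * c from rfl, hc]
      conv_lhs => rw [← mk_toWord (x := V.v n)]
      rw [mul_mk]
    rw [this]
    apply toWord_mk_self
    rw [reduce_eq_self_iff]
    simp only [List.Chain']
    rw [List.isChain_append]
    refine ⟨(reduce_eq_self_iff _).mp hLred, List.isChain_singleton _, ?_⟩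
    intro p hp q hq
    have hpL : p ∈ (V.v n).toWord := List.mem_of_mem_getLast? hp
    have := (V.pos n) p hpL
    simp at hq
    subst hq
    intro hcon
    exact this.2 hcon.1
  -- `(i, true)` occurs in the reduced word of `w n`
  have hinf : [(i, true)] <:+: (V.w n).toWord := by
    by_cases hi : i = 2
    · subst hi
      rw [hwn]
      exact (List.suffix_append _ _).isInfix
    · have hmem : (i, true) ∈ (V.v n).toWord := by
        by_contra hmem
        set o : Fin 3 := if i = 0 then 1 else 0 with ho
        have hall : ∀ p ∈ (V.v n).toWord, p = (o, true) := by
          intro p hp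
          obtain ⟨hpt, hp2⟩ := V.pos n p hp
          have hpi : p.1 ≠ i := by
            intro hcon
            apply hmem
            have : p = (i, true) := by
              cases p; simp_all
            rwa [this] at hp
          have : ∀ i : Fin 3, i ≠ 2 → ∀ j : Fin 3, j ≠ 2 → j ≠ i →
              j = (if i = 0 then 1 else 0) := by decide
          have h1 := this i hi p.1 hp2 hpi
          cases p
          simp_all [ho]
        have hrep := List.eq_replicate_of_mem hall
        apply V.aperiodic n
        refine ⟨[(o, true)], by simp, ?_⟩
        have hflat : List.flatten (List.replicate 7 [(o, true)]) =
            List.replicate 7 ((o, true) : Fin 3 × Bool) := by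
          simp [List.flatten_replicate_singleton]
        rw [hflat, hrep]
        refine (List.IsPrefix.isInfix ?_)
        refine ⟨List.replicate ((V.v n).toWord.length - 7) (o, true), ?_⟩
        rw [← List.replicate_add]
        congr 1
        omega
      obtain ⟨s, t, hst⟩ := List.append_of_mem hmem
      rw [hwn]
      have hin : [(i, true)] <:+: (V.v n).toWord := ⟨s, t, by rw [hst]; simp⟩
      exact hin.trans ⟨[], [((2 : Fin 3), true)], by simp⟩
  -- conclude, for both signs
  have hred1 : reduce [(i, bb)] = [(i, bb)] := reduce_singleton _
  have hne : (mk [(i, bb)] : F) ≠ 1 := by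
    intro hcon
    have := toWord_mk_self (L := [(i, bb)]) hred1
    rw [hcon, toWord_one] at this
    exact List.cons_ne_nil _ _ this.symm
  cases bb with
  | true =>
    refine ⟨hne, n, 1, one_ne_zero, ?_⟩
    rw [toWord_mk_self hred1, zpow_one]
    exact hinf
  | false =>
    refine ⟨hne, n, -1, by norm_num, ?_⟩
    rw [toWord_mk_self hred1, zpow_neg_one, toWord_inv]
    have : ([((i : Fin 3), false)] : List (Fin 3 × Bool)) = invRev [(i, true)] := by
      simp [invRev_singleton']
    rw [this]
    exact invRev_infix hinf

theorem mk_eq_prod_letters : ∀ L : List (Fin 3 × Bool),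
    (L.map fun p => (mk [p] : F)).prod = mk L := by
  intro L
  induction L with
  | nil => simp [one_eq_mk]
  | cons p L ih => rw [List.map_cons, List.prod_cons, ih, mul_mk]; rfl

theorem exists_rep (V : VSeq) (g : F) :
    ∃ l : List F, (∀ z ∈ l, V.IsW z) ∧ l.prod = g := by
  refine ⟨g.toWord.map fun p => mk [p], ?_, ?_⟩
  · intro z hz
    simp only [List.mem_map] at hz
    obtain ⟨p, -, rfl⟩ := hz
    exact letter_isW V p.1 p.2
  · rw [mk_eq_prod_letters, mk_toWord]

theorem normY_nonempty (V : VSeq) (g : F) :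
    {k | ∃ l : List F, l.length = k ∧ (∀ z ∈ l, V.IsW z) ∧ l.prod = g}.Nonempty := by
  obtain ⟨l, h1, h2⟩ := exists_rep V g
  exact ⟨l.length, l, rfl, h1, h2⟩

theorem normY_le_of_rep (V : VSeq) {g : F} (l : List F)
    (h1 : ∀ z ∈ l, V.IsW z) (h2 : l.prod = g) : V.normY g ≤ l.length :=
  Nat.sInf_le ⟨l, rfl, h1, h2⟩

theorem normY_spec (V : VSeq) (g : F) :
    ∃ l : List F, (∀ z ∈ l, V.IsW z) ∧ l.prod = g ∧ l.length = V.normY g := by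
  obtain ⟨l, hl, h1, h2⟩ := Nat.sInf_mem (normY_nonempty V g)
  exact ⟨l, h1, h2, hl⟩

/-- The key geometric lemma: a product of `k` `W`-words equal to `u * v` (without
cancellation between `u` and `v`) can be cut into a product of `W`-words for `u`
and one for `v`, of total length at most `k + 1`. -/
theorem key (V : VSeq) (l : List F) : ∀ u v : F, (∀ z ∈ l, V.IsW z) →
    NoCancel u v → u * v = l.prod →
    ∃ lu lv : List F, (∀ z ∈ lu, V.IsW z) ∧ (∀ z ∈ lv, V.IsW z) ∧
      lu.prod = u ∧ lv.prod = v ∧ lu.length + lv.length ≤ l.length + 1 := by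
  induction l with
  | nil =>
    intro u v _ hnc hp
    simp only [List.prod_nil] at hp
    have h0 : (u * v).toWord = [] := by rw [hp, toWord_one]
    rw [hnc] at h0
    obtain ⟨hu0, hv0⟩ := List.append_eq_nil_iff.mp h0
    have hu : u = 1 := toWord_eq_nil_iff.mp hu0
    have hv : v = 1 := toWord_eq_nil_iff.mp hv0
    exact ⟨[], [], by simp, by simp, by simp [hu], by simp [hv], by simp⟩
  | cons z l' ih =>
    intro u v hW hnc hp
    rw [List.prod_cons] at hp
    obtain ⟨P, Q, R, hZ, hW', hred⟩ :=
      list_split z.toWord (reduce_toWord z) (l'.prod).toWord (reduce_toWord _)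
    have hzw : (z * l'.prod).toWord = P ++ R := by
      conv_lhs => rw [← mk_toWord (x := z), ← mk_toWord (x := l'.prod)]
      rw [mul_mk, toWord_mk, hred]
    have huv : u.toWord ++ v.toWord = P ++ R := by rw [← hnc, hp, hzw]
    have hWz : V.IsW z := hW z (by simp)
    rcases le_total u.toWord.length P.length with hlen | hlen
    · -- the cut point lies inside `z`
      have hUP : u.toWord <+: P :=
        List.prefix_of_prefix_length_le ⟨v.toWord, huv⟩ ⟨R, rfl⟩ hlen
      have hUZ : u.toWord <+: z.toWord := hUP.trans ⟨Q, hZ.symm⟩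
      obtain ⟨S, hS⟩ := hUZ
      have hSred : reduce S = S := by
        rw [reduce_eq_self_iff]
        have hch := (reduce_eq_self_iff _).mp (reduce_toWord z)
        rw [← hS] at hch
        exact (List.isChain_append.mp hch).2.1
      have hsW : (mk S : F).toWord = S := toWord_mk_self hSred
      have hz_eq : z = u * mk S := by
        conv_lhs => rw [← mk_toWord (x := z)]
        conv_rhs => rw [← mk_toWord (x := u)]
        rw [mul_mk, ← hS]
      have hv_eq : v = mk S * l'.prod := by
        have h5 : u * (mk S * l'.prod) = u * v := by
          rw [← mul_assoc, ← hz_eq, hp]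
        exact (mul_left_cancel h5).symm
      have hu_opt : ∃ lg : List F, (∀ t ∈ lg, V.IsW t) ∧ lg.prod = u ∧ lg.length ≤ 1 := by
        by_cases hu1 : u = 1
        · exact ⟨[], by simp, by simp [hu1], by simp⟩
        · refine ⟨[u], ?_, by simp, by simp⟩
          intro t ht
          simp at ht
          subst ht
          exact isW_of_infix V hWz hu1 (List.IsPrefix.isInfix ⟨S, hS⟩)
      have hs_opt : ∃ lg : List F, (∀ t ∈ lg, V.IsW t) ∧ lg.prod = mk S ∧ lg.length ≤ 1 := by
        by_cases hs1 : (mk S : F) = 1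
        · exact ⟨[], by simp, by simp [hs1], by simp⟩
        · refine ⟨[mk S], ?_, by simp, by simp⟩
          intro t ht
          simp at ht
          subst ht
          refine isW_of_infix V hWz hs1 ?_
          rw [hsW]
          exact (List.IsSuffix.isInfix ⟨u.toWord, hS⟩)
      obtain ⟨lu, hlu, hluP, hluL⟩ := hu_opt
      obtain ⟨ls, hls, hlsP, hlsL⟩ := hs_opt
      refine ⟨lu, ls ++ l', hlu, ?_, hluP, ?_, ?_⟩
      · intro t ht
        rcases List.mem_append.mp ht with h | h
        · exact hls t h
        · exact hW t (by simp [h])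
      · rw [List.prod_append, hlsP, ← hv_eq]
      · simp only [List.length_append, List.length_cons]
        omega
    · -- the cut point lies beyond `z`
      have hPU : P <+: u.toWord :=
        List.prefix_of_prefix_length_le ⟨R, rfl⟩ ⟨v.toWord, huv⟩ hlen
      obtain ⟨U₂, hU₂⟩ := hPU
      have hR : R = U₂ ++ v.toWord := by
        have h5 : P ++ (U₂ ++ v.toWord) = P ++ R := by
          rw [← List.append_assoc, hU₂, huv]
        exact (List.append_cancel_left h5).symm
      have hWred := (reduce_eq_self_iff _).mp (reduce_toWord l'.prod)
      rw [hW'] at hWred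
      have hAred : reduce (invRev Q ++ U₂) = invRev Q ++ U₂ := by
        rw [reduce_eq_self_iff]
        have hch : List.Chain' NC ((invRev Q ++ U₂) ++ v.toWord) := by
          rw [List.append_assoc, ← hR]
          exact hWred
        exact (List.isChain_append.mp hch).1
      have hu'W : (mk (invRev Q ++ U₂) : F).toWord = invRev Q ++ U₂ := toWord_mk_self hAred
      have hu'v : (mk (invRev Q ++ U₂) : F) * v = l'.prod := by
        conv_lhs => rw [← mk_toWord (x := v)]
        rw [mul_mk, List.append_assoc, ← hR, ← hW', mk_toWord]
      have hnc' : NoCancel (mk (invRev Q ++ U₂)) v := by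
        unfold NoCancel
        rw [hu'v, hu'W, hW', hR, List.append_assoc]
      obtain ⟨lu', lv', h1, h2, h3, h4, h5⟩ :=
        ih (mk (invRev Q ++ U₂)) v (fun t ht => hW t (by simp [ht])) hnc' hu'v
      have hu_eq : u = z * mk (invRev Q ++ U₂) := by
        have hz_eq : z = mk P * mk Q := by
          rw [mul_mk, ← hZ, mk_toWord]
        have h6 : z * mk (invRev Q ++ U₂) = mk P * mk U₂ := by
          rw [hz_eq, ← mul_mk, ← inv_mk, mul_assoc, mul_inv_cancel_left]
        rw [h6, mul_mk, hU₂, mk_toWord]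
      refine ⟨z :: lu', lv', ?_, h2, ?_, h4, ?_⟩
      · intro t ht
        rcases List.mem_cons.mp ht with h | h
        · subst h; exact hWz
        · exact h1 t h
      · rw [List.prod_cons, h3, ← hu_eq]
      · simp only [List.length_cons]
        omega

/-- For every factorization `w = u * v` without cancellation,
`| |u|_Y + |v|_Y - |w|_Y | ≤ 2C`. -/
theorem stmt9 (V : VSeq) :
    ∃ C : ℝ, 1 ≤ C ∧
      ∀ u v : F, NoCancel u v →
        |(V.normY u : ℝ) + (V.normY v : ℝ) - (V.normY (u * v) : ℝ)| ≤ 2 * C := by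
  refine ⟨1, le_refl 1, ?_⟩
  intro u v hnc
  have hsub : V.normY (u * v) ≤ V.normY u + V.normY v := by
    obtain ⟨lu, hu1, hu2, hu3⟩ := normY_spec V u
    obtain ⟨lv, hv1, hv2, hv3⟩ := normY_spec V v
    have := normY_le_of_rep V (lu ++ lv)
      (by intro t ht; rcases List.mem_append.mp ht with h | h; exacts [hu1 t h, hv1 t h])
      (by rw [List.prod_append, hu2, hv2])
    rwa [List.length_append, hu3, hv3] at this
  have hsup : V.normY u + V.normY v ≤ V.normY (u * v) + 1 := by
    obtain ⟨l, h1, h2, h3⟩ := normY_spec V (u * v)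
    obtain ⟨lu, lv, hlu, hlv, hlup, hlvp, hlen⟩ := key V l u v h1 hnc h2.symm
    have hu := normY_le_of_rep V lu hlu hlup
    have hv := normY_le_of_rep V lv hlv hlvp
    omega
  rw [abs_le]
  constructor
  · have : (V.normY (u * v) : ℝ) ≤ (V.normY u : ℝ) + (V.normY v : ℝ) := by
      exact_mod_cast hsub
    linarith
  · have : (V.normY u : ℝ) + (V.normY v : ℝ) ≤ (V.normY (u * v) : ℝ) + 1 := by
      exact_mod_cast hsup
    linarith

end PurelyLox
end

section
/- Distance formula: for every nontrivial w ∈ F, |w|_Y equals the least k ≥ 1 for which there exist W-words z_1, …, z_k with w = z_1⋯z_k without cancellation (i.e., the reduced word of w is the concatenation of the reduced words of z_1, …, z_k). -/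
open FreeGroup Filter

namespace PurelyLox

/-! ### Auxiliary material for the distance formula -/

abbrev Letter := (Fin 3) × Bool

def Reduced (L : List Letter) : Prop :=
  List.Chain' (fun x y => ¬(x.1 = y.1 ∧ x.2 = !y.2)) L

lemma not_chain' {α : Type*} {R : α → α → Prop} {L : List α} (h : ¬ List.Chain' R L) :
    ∃ L₁ x y L₂, L = L₁ ++ x :: y :: L₂ ∧ ¬ R x y := by
  induction L with
  | nil => exact absurd List.isChain_nil h
  | cons x L ih =>
    cases L with
    | nil => exact absurd (List.isChain_singleton x) h
    | cons y L =>
      by_cases hR : R x y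
      · have h2 : ¬ List.Chain' R (y :: L) := fun hc => h (List.isChain_cons_cons.2 ⟨hR, hc⟩)
        obtain ⟨L₁, u, v, L₂, hEq, hUV⟩ := ih h2
        exact ⟨x :: L₁, u, v, L₂, by rw [List.cons_append, hEq], hUV⟩
      · exact ⟨[], x, y, L, rfl, hR⟩

lemma reduce_eq_self {L : List Letter} (h : Reduced L) : FreeGroup.reduce L = L := by
  induction L with
  | nil => rfl
  | cons x L ih =>
    have hL := ih h.tail
    rw [FreeGroup.reduce.cons, hL]
    cases L with
    | nil => rfl
    | cons y L =>
      have hxy : ¬(x.1 = y.1 ∧ x.2 = !y.2) := (List.isChain_cons_cons.1 h).1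
      show (if x.1 = y.1 ∧ x.2 = !y.2 then L else x :: y :: L) = x :: y :: L
      rw [if_neg hxy]

lemma reduced_toWord (g : F) : Reduced g.toWord := by
  by_contra h
  obtain ⟨L₁, x, y, L₂, hEq, hR⟩ := not_chain' h
  obtain ⟨h1, h2⟩ := not_not.1 hR
  have hy : y = (x.1, !x.2) := by
    obtain ⟨y1, y2⟩ := y
    obtain ⟨x1, x2⟩ := x
    simp only at h1 h2
    simp [← h1, h2, Bool.not_not]
  have hEq' : FreeGroup.reduce g.toWord = L₁ ++ (x.1, x.2) :: (x.1, !x.2) :: L₂ := by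
    rw [FreeGroup.reduce_toWord, hEq, hy]
  exact FreeGroup.reduce.not hEq'

lemma toWord_mk_reduced {L : List Letter} (h : Reduced L) : (FreeGroup.mk L).toWord = L := by
  rw [FreeGroup.toWord_mk, reduce_eq_self h]

lemma prod_eq_mk_flatten : ∀ l : List F, l.prod = FreeGroup.mk (l.map FreeGroup.toWord).flatten := by
  intro l
  induction l with
  | nil => simp [FreeGroup.one_eq_mk]
  | cons z l ih =>
    rw [List.prod_cons, ih, List.map_cons, List.flatten_cons, ← FreeGroup.mul_mk,
      FreeGroup.mk_toWord]

lemma infix_of_mem {α : Type*} {a : α} {l : List α} (h : a ∈ l) : [a] <:+: l := by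
  obtain ⟨s, t, rfl⟩ := List.append_of_mem h
  exact ⟨s, t, by simp⟩

lemma flatten_replicate_singleton {α : Type*} (n : ℕ) (a : α) :
    (List.replicate n [a]).flatten = List.replicate n a := by
  induction n with
  | zero => rfl
  | succ n ih => simp [List.replicate_succ, ih]

lemma flatten_map_singleton {α : Type*} (L : List α) : (L.map fun x => [x]).flatten = L := by
  induction L with
  | nil => rfl
  | cons x L ih => simp [ih]

lemma isW_mk_infix (V : VSeq) {z : F} (hz : V.IsW z) {u : List Letter}
    (hu : u ≠ []) (hinf : u <:+: z.toWord) : V.IsW (FreeGroup.mk u) := by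
  have hred : Reduced u := (reduced_toWord z).infix hinf
  have htw : (FreeGroup.mk u).toWord = u := toWord_mk_reduced hred
  obtain ⟨hz1, n, m, hm, hsub⟩ := hz
  refine ⟨fun h1 => hu ?_, n, m, hm, ?_⟩
  · rw [h1, FreeGroup.toWord_one] at htw; exact htw.symm
  · rw [htw]; exact hinf.trans hsub

lemma c_toWord : c.toWord = [((2 : Fin 3), true)] := FreeGroup.toWord_of 2

lemma w_toWord (V : VSeq) (n : ℕ) :
    (V.w n).toWord = (V.v n).toWord ++ [((2 : Fin 3), true)] := by
  have h1 : V.w n = FreeGroup.mk ((V.v n).toWord ++ c.toWord) := by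
    rw [VSeq.w]
    conv_lhs => rw [← FreeGroup.mk_toWord (x := V.v n), ← FreeGroup.mk_toWord (x := c)]
    rw [FreeGroup.mul_mk]
  have hred : Reduced ((V.v n).toWord ++ c.toWord) := by
    rw [c_toWord]
    apply List.IsChain.append (reduced_toWord _) (List.isChain_singleton _)
    intro x hx y hy
    simp only [List.head?_cons, Option.mem_def, Option.some.injEq] at hy
    obtain ⟨hne, hxl⟩ := List.mem_getLast?_eq_getLast hx
    have hxm : x ∈ (V.v n).toWord := by rw [hxl]; exact List.getLast_mem hne
    have hpos := (V.pos n) x hxm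
    rintro ⟨hc1, _⟩
    exact hpos.2 (by rw [hc1, ← hy])
  rw [h1, toWord_mk_reduced hred, c_toWord]

lemma mem_w (V : VSeq) (x1 : Fin 3) : ∃ n, (x1, true) ∈ (V.w n).toWord := by
  by_cases h2 : x1 = 2
  · exact ⟨0, by rw [w_toWord, h2]; simp⟩
  · obtain ⟨n, hn⟩ := (V.len_tendsto.eventually_ge_atTop 7).exists
    refine ⟨n, ?_⟩
    rw [w_toWord]
    apply List.mem_append_left
    by_contra hmem
    have hx1 : (x1 : Fin 3).val ≠ 2 := fun h => h2 (Fin.ext h)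
    set o : Fin 3 := ⟨1 - x1.val, by omega⟩ with ho
    have hall : ∀ ℓ ∈ (V.v n).toWord, ℓ = (o, true) := by
      intro ℓ hℓ
      obtain ⟨hb, hne2⟩ := V.pos n ℓ hℓ
      have hnx : ℓ.1 ≠ x1 := by
        intro h
        apply hmem
        have : ℓ = (x1, true) := by
          obtain ⟨l1, l2⟩ := ℓ; simp only at h hb; rw [h, hb]
        rwa [this] at hℓ
      have h1 : ℓ.1 = o := by
        apply Fin.ext
        have hv2 : ℓ.1.val ≠ 2 := fun h => hne2 (Fin.ext h)
        have hvx : ℓ.1.val ≠ x1.val := fun h => hnx (Fin.ext h)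
        have := ℓ.1.isLt
        have := x1.isLt
        simp only [ho]
        omega
      obtain ⟨l1, l2⟩ := ℓ
      simp only at h1 hb
      rw [h1, hb]
    have hrep : (V.v n).toWord = List.replicate (V.v n).toWord.length (o, true) :=
      List.eq_replicate_of_mem hall
    apply V.aperiodic n
    refine ⟨[(o, true)], by simp, ?_⟩
    rw [flatten_replicate_singleton, hrep]
    have hsplit : List.replicate (V.v n).toWord.length ((o : Fin 3), true) =
        [] ++ List.replicate 7 (o, true) ++ List.replicate ((V.v n).toWord.length - 7) (o, true) := by
      rw [List.nil_append, ← List.replicate_add]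
      congr 1
      omega
    exact ⟨[], List.replicate ((V.v n).toWord.length - 7) (o, true), hsplit.symm⟩

lemma isW_letter (V : VSeq) (x : Letter) : V.IsW (FreeGroup.mk [x]) := by
  obtain ⟨x1, bb⟩ := x
  obtain ⟨n, hn⟩ := mem_w V x1
  have htw : (FreeGroup.mk [(x1, bb)]).toWord = [(x1, bb)] :=
    toWord_mk_reduced (List.isChain_singleton _)
  refine ⟨fun h => by rw [h, FreeGroup.toWord_one] at htw; exact (List.cons_ne_nil _ _) htw.symm, n, ?_⟩
  cases bb with
  | true => exact ⟨1, one_ne_zero, by rw [htw, zpow_one]; exact infix_of_mem hn⟩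
  | false =>
    refine ⟨-1, by norm_num, ?_⟩
    rw [htw, zpow_neg, zpow_one, FreeGroup.toWord_inv]
    apply infix_of_mem
    simp only [FreeGroup.invRev, List.mem_reverse]
    exact List.mem_map_of_mem hn

lemma exists_bad : ∀ {l : List F}, (∀ z ∈ l, z.toWord ≠ []) →
    ¬ Reduced (l.map FreeGroup.toWord).flatten →
    ∃ (l₁ : List F) (z₁ z₂ : F) (l₂ : List F) (p : List Letter) (x : Letter) (q : List Letter),
      l = l₁ ++ z₁ :: z₂ :: l₂ ∧ z₁.toWord = p ++ [x] ∧ z₂.toWord = (x.1, !x.2) :: q := by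
  intro l
  induction l with
  | nil => intro _ hbad; exact absurd List.isChain_nil hbad
  | cons z t ih =>
    intro hne hbad
    rw [List.map_cons, List.flatten_cons] at hbad
    simp only [Reduced, List.Chain'] at hbad
    rw [List.isChain_append] at hbad
    by_cases hB : List.Chain' (fun x y : Letter => ¬(x.1 = y.1 ∧ x.2 = !y.2))
        ((t.map FreeGroup.toWord).flatten)
    · have hC : ¬ ∀ x ∈ (FreeGroup.toWord z).getLast?,
          ∀ y ∈ ((t.map FreeGroup.toWord).flatten).head?, ¬(x.1 = y.1 ∧ x.2 = !y.2) :=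
        fun h => hbad ⟨reduced_toWord z, hB, h⟩
      push_neg at hC
      obtain ⟨x, hx, y, hy, h1, h2⟩ := hC
      -- z.toWord = p ++ [x]
      have hzdec : z.toWord = z.toWord.dropLast ++ [x] :=
        (List.dropLast_append_getLast? x hx).symm
      -- find head of the flatten
      cases t with
      | nil => simp at hy
      | cons z₂ t' =>
        have hz2 := hne z₂ (by simp)
        cases hz2' : z₂.toWord with
        | nil => exact absurd hz2' hz2
        | cons y' q =>
          have hy' : y = y' := by
            rw [List.map_cons, List.flatten_cons, hz2'] at hy
            simp only [List.cons_append, List.head?_cons, Option.mem_def,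
              Option.some.injEq] at hy
            exact hy.symm
          have hyy : y' = (x.1, !x.2) := by
            obtain ⟨ya, yb⟩ := y'
            subst hy'
            simp only at h1 h2
            simp [← h1, h2, Bool.not_not]
          exact ⟨[], z, z₂, t', z.toWord.dropLast, x, q, rfl, hzdec, by rw [hz2', hyy]⟩
    · obtain ⟨l₁, z₁, z₂, l₂, p, x, q, hEq, hz₁, hz₂⟩ :=
        ih (fun w hw => hne w (List.mem_cons_of_mem _ hw)) hB
      exact ⟨z :: l₁, z₁, z₂, l₂, p, x, q, by rw [hEq, List.cons_append], hz₁, hz₂⟩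

lemma key_s11 (V : VSeq) : ∀ (N : ℕ) (l : List F),
    (l.map fun z => z.toWord.length).sum ≤ N → (∀ z ∈ l, V.IsW z) →
    ∃ l' : List F, l'.length ≤ l.length ∧ (∀ z ∈ l', V.IsW z) ∧ l'.prod = l.prod ∧
      (l.prod).toWord = (l'.map FreeGroup.toWord).flatten := by
  intro N
  induction N using Nat.strong_induction_on with
  | _ N ih =>
    intro l hsum hW
    by_cases hred : Reduced (l.map FreeGroup.toWord).flatten
    · refine ⟨l, le_refl _, hW, rfl, ?_⟩
      rw [prod_eq_mk_flatten l, toWord_mk_reduced hred]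
    · have hne : ∀ z ∈ l, z.toWord ≠ [] := fun z hz h =>
        (hW z hz).1 (FreeGroup.toWord_eq_nil_iff.1 h)
      obtain ⟨l₁, z₁, z₂, l₂, p, x, q, hl, hz₁, hz₂⟩ := exists_bad hne hred
      have hz₁W : V.IsW z₁ := hW z₁ (by rw [hl]; simp)
      have hz₂W : V.IsW z₂ := hW z₂ (by rw [hl]; simp)
      have hp_pre : p <+: z₁.toWord := ⟨[x], hz₁.symm⟩
      have hq_suf : q <:+ z₂.toWord := ⟨[(x.1, !x.2)], hz₂.symm⟩
      have hpred : Reduced p := (reduced_toWord z₁).prefix hp_pre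
      have hqred : Reduced q := (reduced_toWord z₂).suffix hq_suf
      have hptw : (FreeGroup.mk p).toWord = p := toWord_mk_reduced hpred
      have hqtw : (FreeGroup.mk q).toWord = q := toWord_mk_reduced hqred
      have hmul : z₁ * z₂ = FreeGroup.mk p * FreeGroup.mk q := by
        conv_lhs => rw [← FreeGroup.mk_toWord (x := z₁), ← FreeGroup.mk_toWord (x := z₂)]
        rw [hz₁, hz₂, FreeGroup.mul_mk, FreeGroup.mul_mk]
        apply FreeGroup.reduce.exact
        apply FreeGroup.reduce.Step.eq
        have hshape : p ++ [x] ++ (x.1, !x.2) :: q = p ++ (x.1, x.2) :: (x.1, !x.2) :: q := by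
          simp
        rw [hshape]
        exact FreeGroup.Red.Step.not
      set mids : List F := (if p = [] then [] else [FreeGroup.mk p]) ++
        (if q = [] then [] else [FreeGroup.mk q]) with hmids
      have hmidsprod : mids.prod = FreeGroup.mk p * FreeGroup.mk q := by
        rw [hmids]
        split_ifs with h1 h2 h2 <;> subst_vars <;>
          simp [← FreeGroup.one_eq_mk]
      have hmidsW : ∀ z ∈ mids, V.IsW z := by
        intro z hz
        rw [hmids] at hz
        rcases List.mem_append.1 hz with h | h
        · by_cases h1 : p = []
          · rw [if_pos h1] at h; simp at h
          · rw [if_neg h1] at h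
            simp only [List.mem_singleton] at h
            subst h
            exact isW_mk_infix V hz₁W h1 hp_pre.isInfix
        · by_cases h1 : q = []
          · rw [if_pos h1] at h; simp at h
          · rw [if_neg h1] at h
            simp only [List.mem_singleton] at h
            subst h
            exact isW_mk_infix V hz₂W h1 hq_suf.isInfix
      have hmidslen : mids.length ≤ 2 := by rw [hmids]; split_ifs <;> simp
      have hmidssum : (mids.map fun z => z.toWord.length).sum ≤ p.length + q.length := by
        rw [hmids]
        split_ifs <;> simp [hptw, hqtw]
      set l' : List F := l₁ ++ mids ++ l₂ with hl'
      have hprod : l'.prod = l.prod := by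
        rw [hl', hl]
        simp only [List.prod_append, List.prod_cons]
        rw [hmidsprod, ← hmul]
        simp only [mul_assoc]
      have hlen : l'.length ≤ l.length := by
        rw [hl', hl]
        simp only [List.length_append, List.length_cons]
        omega
      have hsum2 : (l'.map fun z => z.toWord.length).sum + 2 ≤
          (l.map fun z => z.toWord.length).sum := by
        rw [hl', hl]
        simp only [List.map_append, List.sum_append, List.map_cons, List.sum_cons,
          hz₁, hz₂, List.length_append, List.length_cons, List.length_singleton]
        omega
      have hN : (l'.map fun z => z.toWord.length).sum < N := by omega
      have hW' : ∀ z ∈ l', V.IsW z := by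
        intro z hz
        rw [hl'] at hz
        rcases List.mem_append.1 hz with h | h
        · rcases List.mem_append.1 h with h' | h'
          · exact hW z (by rw [hl]; exact List.mem_append_left _ h')
          · exact hmidsW z h'
        · refine hW z ?_
          rw [hl]
          exact List.mem_append_right _ (List.mem_cons_of_mem _ (List.mem_cons_of_mem _ h))
      obtain ⟨l'', hlen'', hW'', hprod'', htw''⟩ := ih _ hN l' le_rfl hW'
      refine ⟨l'', le_trans hlen'' hlen, hW'', by rw [hprod'', hprod], ?_⟩
      rw [← hprod]
      exact htw''

/-- Distance formula: for nontrivial `w`, `|w|_Y` is the least `k ≥ 1`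
such that `w` is a product of `k` `W`-words without cancellation. -/
theorem stmt11 (V : VSeq) :
    ∀ w : F, w ≠ 1 →
      V.normY w = sInf {k | 1 ≤ k ∧ ∃ l : List F, l.length = k ∧ (∀ z ∈ l, V.IsW z) ∧
        l.prod = w ∧ w.toWord = (l.map FreeGroup.toWord).flatten} := by
  intro w hw
  set S2 : Set ℕ := {k | 1 ≤ k ∧ ∃ l : List F, l.length = k ∧ (∀ z ∈ l, V.IsW z) ∧
    l.prod = w ∧ w.toWord = (l.map FreeGroup.toWord).flatten} with hS2
  set S1 : Set ℕ := {k | ∃ l : List F, l.length = k ∧ (∀ z ∈ l, V.IsW z) ∧ l.prod = w} with hS1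
  have hnorm : V.normY w = sInf S1 := rfl
  -- the letter-by-letter decomposition
  set l0 : List F := w.toWord.map (fun x => FreeGroup.mk [x]) with hl0
  have hl0W : ∀ z ∈ l0, V.IsW z := by
    intro z hz
    rw [hl0] at hz
    obtain ⟨x, _, rfl⟩ := List.mem_map.1 hz
    exact isW_letter V x
  have hl0map : l0.map FreeGroup.toWord = w.toWord.map (fun x => [x]) := by
    rw [hl0, List.map_map]
    apply List.map_congr_left
    intro x _
    exact toWord_mk_reduced (List.isChain_singleton x)
  have hl0flat : (l0.map FreeGroup.toWord).flatten = w.toWord := by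
    rw [hl0map, flatten_map_singleton]
  have hl0prod : l0.prod = w := by
    rw [prod_eq_mk_flatten, hl0flat, FreeGroup.mk_toWord]
  have hwne : w.toWord ≠ [] := fun h => hw (FreeGroup.toWord_eq_nil_iff.1 h)
  have hwlen : 1 ≤ w.toWord.length := List.length_pos_iff.2 hwne
  have hmem2 : w.toWord.length ∈ S2 :=
    ⟨hwlen, l0, by rw [hl0]; simp, hl0W, hl0prod, hl0flat.symm⟩
  have hS2ne : S2.Nonempty := ⟨_, hmem2⟩
  have hmem1 : w.toWord.length ∈ S1 := ⟨l0, by rw [hl0]; simp, hl0W, hl0prod⟩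
  have hS1ne : S1.Nonempty := ⟨_, hmem1⟩
  apply le_antisymm
  · rw [hnorm]
    obtain ⟨_, l, hlen, hWl, hprodl, _⟩ := Nat.sInf_mem hS2ne
    exact Nat.sInf_le ⟨l, hlen, hWl, hprodl⟩
  · rw [hnorm]
    obtain ⟨l, hlen, hWl, hprodl⟩ := Nat.sInf_mem hS1ne
    obtain ⟨l', hlen', hW', hprod', htw'⟩ := key_s11 V _ l le_rfl hWl
    have hl'ne : l' ≠ [] := by
      intro h
      rw [h] at hprod'
      exact hw (by rw [← hprodl, ← hprod']; rfl)
    have h1k : 1 ≤ l'.length := List.length_pos_iff.2 hl'ne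
    have hmem : l'.length ∈ S2 :=
      ⟨h1k, l', rfl, hW', by rw [hprod', hprodl], by rw [← hprodl]; exact htw'⟩
    calc sInf S2 ≤ l'.length := Nat.sInf_le hmem
      _ ≤ l.length := hlen'
      _ = sInf S1 := hlen

end PurelyLox
end

section
/- Let u₁, u₂ ∈ F be nontrivial cyclically reduced elements and suppose that for some integers k, t ≥ 1 the reduced words of u₁^k and u₂^t have a common initial segment of length at least |u₁| + |u₂|, where |·| denotes reduced word length. Then there exists a unique root-free cyclically reduced element u₀ ∈ F (root-free meaning u₀ is not equal to x^s for any x ∈ F and any integer s with |s| ≥ 2) such that u₁ = u₀^r and u₂ = u₀^s for some integers r, s ≥ 1. -/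
namespace PurelyLoxGen

/-- An element of a free group is cyclically reduced. -/
def CyclicallyReduced {α : Type*} [DecidableEq α] (g : FreeGroup α) : Prop :=
  (g * g).toWord = g.toWord ++ g.toWord

/-- An element of a free group is root-free: it is not a proper power. -/
def RootFree {α : Type*} [DecidableEq α] (g : FreeGroup α) : Prop :=
  ∀ (x : FreeGroup α) (s : ℤ), 2 ≤ |s| → g ≠ x ^ s

open List

section Words
variable {β : Type*}

/-- `n`-fold concatenation of a word. -/
def powW (w : List β) : ℕ → List β
  | 0 => []
  | n+1 => w ++ powW w n

@[simp] lemma powW_zero (w : List β) : powW w 0 = [] := rfl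
lemma powW_succ (w : List β) (n : ℕ) : powW w (n+1) = w ++ powW w n := rfl
@[simp] lemma powW_one (w : List β) : powW w 1 = w := by simp [powW]

@[simp] lemma powW_nil (n : ℕ) : powW ([] : List β) n = [] := by
  induction n with
  | zero => rfl
  | succ n ih => simp [powW_succ, ih]

@[simp] lemma length_powW (w : List β) (n : ℕ) : (powW w n).length = n * w.length := by
  induction n with
  | zero => simp
  | succ n ih => simp [powW_succ, ih]; ring

lemma powW_add (w : List β) (a b : ℕ) : powW w (a+b) = powW w a ++ powW w b := by
  induction a with
  | zero => simp
  | succ a ih => rw [Nat.succ_add, powW_succ, powW_succ, ih, append_assoc]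

lemma powW_succ' (w : List β) (n : ℕ) : powW w (n+1) = powW w n ++ w := by
  rw [powW_add, powW_one]

lemma powW_powW (w : List β) (e j : ℕ) : powW (powW w e) j = powW w (e*j) := by
  induction j with
  | zero => simp
  | succ j ih =>
    rw [powW_succ, ih, show e*(j+1) = e + e*j by ring, powW_add]

lemma powW_prefix (w : List β) {a b : ℕ} (h : a ≤ b) : powW w a <+: powW w b := by
  obtain ⟨c, rfl⟩ := Nat.exists_eq_add_of_le h
  rw [powW_add]; exact prefix_append _ _

lemma head?_powW (w : List β) {n : ℕ} (hn : 1 ≤ n) : (powW w n).head? = w.head? := by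
  obtain ⟨m, rfl⟩ := Nat.exists_eq_add_of_le hn
  cases w with
  | nil => simp
  | cons x t => rw [show 1 + m = m + 1 by ring, powW_succ]; simp

lemma getLast?_powW (w : List β) {n : ℕ} (hn : 1 ≤ n) : (powW w n).getLast? = w.getLast? := by
  obtain ⟨m, rfl⟩ := Nat.exists_eq_add_of_le hn
  rw [show 1 + m = m + 1 by ring, powW_succ', getLast?_append]
  cases w with
  | nil => simp
  | cons x t =>
    have : (x :: t).getLast? = some ((x :: t).getLast (by simp)) := getLast?_eq_getLast _
    rw [this]; rfl

/-- a word has period `p`. -/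
def HasPeriod (L : List β) (p : ℕ) : Prop :=
  ∀ i : ℕ, i + p < L.length → L[i]? = L[i+p]?

lemma IsPrefix.getElem?_eq {L' L : List β} (hp : L' <+: L) {i : ℕ} (hi : i < L'.length) :
    L'[i]? = L[i]? := by
  obtain ⟨t, rfl⟩ := hp
  rw [List.getElem?_append, if_pos hi]

lemma hasPeriod_of_prefix {L L' : List β} {p : ℕ} (hp : L' <+: L) (h : HasPeriod L p) :
    HasPeriod L' p := by
  intro i hi
  have hl := hp.length_le
  rw [IsPrefix.getElem?_eq hp (by omega), IsPrefix.getElem?_eq hp (by omega)]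
  exact h i (by omega)

lemma hasPeriod_powW (w : List β) (n : ℕ) : HasPeriod (powW w n) w.length := by
  intro i hi
  rw [length_powW] at hi
  cases n with
  | zero => simp at hi
  | succ n =>
    have h1 : i < (powW w n).length := by rw [length_powW]; nlinarith [hi]
    have hpre : powW w n <+: powW w (n+1) := powW_prefix w (Nat.le_succ n)
    rw [← IsPrefix.getElem?_eq hpre h1, powW_succ, List.getElem?_append,
      if_neg (by omega), show i + w.length - w.length = i by omega]

lemma fine_wilf_aux : ∀ (N p q : ℕ) (L : List β), p + q ≤ N → 1 ≤ p → 1 ≤ q →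
    HasPeriod L p → HasPeriod L q → p + q ≤ L.length → HasPeriod L (Nat.gcd p q) := by
  intro N
  induction N with
  | zero => intro p q L h hp _ _ _ _; omega
  | succ N ih =>
    have key : ∀ p q (L : List β), p + q ≤ N + 1 → 1 ≤ p → p < q →
        HasPeriod L p → HasPeriod L q → p + q ≤ L.length → HasPeriod L (Nat.gcd p q) := by
      intro p q L hN hp h hLp hLq hlen
      have hq : 1 ≤ q := by omega
      have hL'p : HasPeriod (L.take (L.length - p)) p :=
        hasPeriod_of_prefix (take_prefix _ _) hLp
      have hlen' : (L.take (L.length - p)).length = L.length - p := by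
        rw [length_take]; omega
      have hL'q : HasPeriod (L.take (L.length - p)) (q - p) := by
        intro i hi
        rw [hlen'] at hi
        rw [IsPrefix.getElem?_eq (take_prefix _ L) (by omega),
            IsPrefix.getElem?_eq (take_prefix _ L) (by omega)]
        have e1 : L[i]? = L[i + q]? := hLq i (by omega)
        have e2 : L[i + (q-p)]? = L[i + (q-p) + p]? := hLp _ (by omega)
        rw [show i + (q-p) + p = i + q by omega] at e2
        rw [e1, e2]
      have hrec := ih p (q - p) (L.take (L.length - p)) (by omega) hp (by omega)
        hL'p hL'q (by omega)
      rw [Nat.gcd_sub_self_right (le_of_lt h)] at hrec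
      set g := Nat.gcd p q with hgdef
      have hgp : g ≤ p := Nat.le_of_dvd hp (Nat.gcd_dvd_left p q)
      have hgq : g ∣ q - p := (Nat.dvd_sub (Nat.gcd_dvd_right p q) (Nat.gcd_dvd_left p q))
      have hgqp : g ≤ q - p := Nat.le_of_dvd (by omega) hgq
      intro i hi
      by_cases hcase : i + g < L.length - p
      · have := hrec i (by rw [hlen']; omega)
        rwa [IsPrefix.getElem?_eq (take_prefix _ L) (by omega),
             IsPrefix.getElem?_eq (take_prefix _ L) (by omega)] at this
      · have hip : p ≤ i := by omega
        have e1 : L[i - p]? = L[i - p + p]? := hLp _ (by omega)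
        have e2 : L[i + g - p]? = L[i + g - p + p]? := hLp _ (by omega)
        have e3 := hrec (i - p) (by rw [hlen']; omega)
        rw [IsPrefix.getElem?_eq (take_prefix _ L) (by omega),
            IsPrefix.getElem?_eq (take_prefix _ L) (by omega)] at e3
        rw [show i - p + p = i by omega] at e1
        rw [show i + g - p + p = i + g by omega] at e2
        rw [show i - p + g = i + g - p by omega] at e3
        rw [← e1, e3, e2]
    intro p q L hN hp hq hLp hLq hlen
    rcases lt_trichotomy p q with h | h | h
    · exact key p q L hN hp h hLp hLq hlen
    · subst h; simpa [Nat.gcd_self] using hLp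
    · rw [Nat.gcd_comm]
      exact key q p L (by omega) hq h hLq hLp (by omega)

lemma fine_wilf {p q : ℕ} {L : List β} (hp : 1 ≤ p) (hq : 1 ≤ q)
    (hLp : HasPeriod L p) (hLq : HasPeriod L q) (hlen : p + q ≤ L.length) :
    HasPeriod L (Nat.gcd p q) :=
  fine_wilf_aux (p+q) p q L le_rfl hp hq hLp hLq hlen

lemma eq_powW_of_period_aux : ∀ (N : ℕ) (L : List β) (g : ℕ), L.length ≤ N → 1 ≤ g →
    g ∣ L.length → HasPeriod L g → L = powW (L.take g) (L.length / g) := by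
  intro N
  induction N with
  | zero =>
    intro L g hN _ _ _
    have hL : L = [] := by
      cases L with
      | nil => rfl
      | cons x t => simp at hN
    subst hL; simp
  | succ N ih =>
    intro L g hN hg hdvd hper
    rcases eq_or_ne L [] with rfl | hL
    · simp
    · have hlpos : 1 ≤ L.length := length_pos_iff.2 hL
      have hgle : g ≤ L.length := Nat.le_of_dvd hlpos hdvd
      rcases eq_or_lt_of_le hgle with heq | hlt
      · -- L.length = g
        rw [← heq, Nat.div_self (by omega), powW_one, take_of_length_le (by omega)]
      · -- g < L.length, so 2*g ≤ L.length by divisibility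
        have h2g : 2 * g ≤ L.length := by
          obtain ⟨c, hc⟩ := hdvd
          have hc2 : 2 ≤ c := by
            by_contra hc2
            have : g * c ≤ g * 1 := Nat.mul_le_mul_left g (by omega)
            simp only [Nat.mul_one] at this
            omega
          have : g * 2 ≤ g * c := Nat.mul_le_mul_left g hc2
          omega
        have hdl : (L.drop g).length = L.length - g := by simp
        have hdper : HasPeriod (L.drop g) g := by
          intro i hi
          rw [hdl] at hi
          rw [List.getElem?_drop, List.getElem?_drop]
          have := hper (g + i) (by omega)
          rwa [show g + i + g = g + (i + g) by omega] at this
        have hddvd : g ∣ (L.drop g).length := by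
          rw [hdl]; exact Nat.dvd_sub hdvd dvd_rfl
        have ihd := ih (L.drop g) g (by omega) hg hddvd hdper
        have htake : (L.drop g).take g = L.take g := by
          apply List.ext_getElem?
          intro i
          rw [List.getElem?_take, List.getElem?_take]
          by_cases hi : i < g
          · rw [if_pos hi, if_pos hi, List.getElem?_drop]
            have := hper i (by omega)
            rw [this, show g + i = i + g by omega]
          · rw [if_neg hi, if_neg hi]
        rw [htake] at ihd
        obtain ⟨c, hc⟩ := hdvd
        have hc1 : 1 ≤ c := by
          rcases Nat.eq_zero_or_pos c with rfl | h; · omega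
          · exact h
        have hdq : (L.drop g).length / g = c - 1 := by
          rw [hdl, hc, show g * c - g = g * (c - 1) by rw [Nat.mul_sub, Nat.mul_one],
            Nat.mul_div_cancel_left _ (by omega)]
        rw [hdq] at ihd
        conv_lhs => rw [← take_append_drop g L, ihd]
        rw [hc, Nat.mul_div_cancel_left _ (by omega)]
        conv_rhs => rw [show c = c - 1 + 1 by omega, powW_succ]

lemma eq_powW_of_period {L : List β} {g : ℕ} (hg : 1 ≤ g) (hdvd : g ∣ L.length)
    (hper : HasPeriod L g) : L = powW (L.take g) (L.length / g) :=
  eq_powW_of_period_aux L.length L g le_rfl hg hdvd hper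

/-- A word is primitive: it is not a proper power. -/
def Primitive (w : List β) : Prop := ∀ c e, 2 ≤ e → w ≠ powW c e

lemma exists_primitive_aux : ∀ (N : ℕ) (w : List β), w.length ≤ N → w ≠ [] →
    ∃ c e, Primitive c ∧ c ≠ [] ∧ 1 ≤ e ∧ w = powW c e := by
  intro N
  induction N with
  | zero =>
    intro w hN hw
    cases w with
    | nil => exact absurd rfl hw
    | cons x t => simp at hN
  | succ N ih =>
    intro w hN hw
    by_cases hp : Primitive w
    · exact ⟨w, 1, hp, hw, le_refl 1, (powW_one w).symm⟩
    · simp only [Primitive, not_forall] at hp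
      obtain ⟨c, e, he, hwe⟩ := hp
      rw [not_ne_iff] at hwe
      have hc : c ≠ [] := by
        rintro rfl; rw [powW_nil] at hwe; exact hw hwe
      have hcpos : 1 ≤ c.length := length_pos_iff.2 hc
      have hlt : c.length < w.length := by
        rw [hwe, length_powW]; nlinarith
      obtain ⟨d, f, h1, h2, h3, h4⟩ := ih c (by omega) hc
      exact ⟨d, f*e, h1, h2, Nat.mul_pos h3 (by omega),
        by rw [hwe, h4, ← powW_powW]⟩

lemma exists_primitive {w : List β} (hw : w ≠ []) :
    ∃ c e, Primitive c ∧ c ≠ [] ∧ 1 ≤ e ∧ w = powW c e :=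
  exists_primitive_aux w.length w le_rfl hw

/-- two words whose powers share a long enough common prefix have a common root. -/
lemma common_root {w₁ w₂ : List β} (h₁ : w₁ ≠ []) (h₂ : w₂ ≠ []) {k t : ℕ} {p : List β}
    (hp1 : p <+: powW w₁ k) (hp2 : p <+: powW w₂ t)
    (hlen : w₁.length + w₂.length ≤ p.length) :
    ∃ z, z ≠ [] ∧ ∃ a b, 1 ≤ a ∧ 1 ≤ b ∧ w₁ = powW z a ∧ w₂ = powW z b := by
  set n := w₁.length with hn'
  set m := w₂.length with hm'
  have hn : 1 ≤ n := length_pos_iff.2 h₁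
  have hm : 1 ≤ m := length_pos_iff.2 h₂
  set q := p.take (n + m) with hq'
  have hql : q.length = n + m := by
    rw [hq', length_take]; omega
  have hq1 : q <+: powW w₁ k := (take_prefix _ _).trans hp1
  have hq2 : q <+: powW w₂ t := (take_prefix _ _).trans hp2
  have hk1 : 1 ≤ k := by
    by_contra hk
    have : k = 0 := by omega
    subst this
    have := hq1.length_le
    simp [hql] at this
    omega
  have ht1 : 1 ≤ t := by
    by_contra hk
    have : t = 0 := by omega
    subst this
    have := hq2.length_le
    simp [hql] at this
    omega
  have hper1 : HasPeriod q n := hasPeriod_of_prefix hq1 (hasPeriod_powW w₁ k)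
  have hper2 : HasPeriod q m := hasPeriod_of_prefix hq2 (hasPeriod_powW w₂ t)
  set g := Nat.gcd n m with hg'
  have hg : 1 ≤ g := Nat.gcd_pos_of_pos_left _ hn
  have hperg : HasPeriod q g := fine_wilf hn hm hper1 hper2 (by omega)
  have hgn : g ∣ n := Nat.gcd_dvd_left n m
  have hgm : g ∣ m := Nat.gcd_dvd_right n m
  have hgle_n : g ≤ n := Nat.le_of_dvd hn hgn
  have hgle_m : g ≤ m := Nat.le_of_dvd hm hgm
  -- w₁ is the prefix of q of length n
  have hw1q : w₁ <+: q := by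
    refine prefix_of_prefix_length_le ?_ hq1 (by omega)
    simpa using powW_prefix w₁ hk1
  have hw2q : w₂ <+: q := by
    refine prefix_of_prefix_length_le ?_ hq2 (by omega)
    simpa using powW_prefix w₂ ht1
  have hw1 : w₁ = q.take n := by
    have := prefix_iff_eq_take.1 hw1q
    rwa [← hn'] at this
  have hw2 : w₂ = q.take m := by
    have := prefix_iff_eq_take.1 hw2q
    rwa [← hm'] at this
  refine ⟨q.take g, ?_, n / g, m / g, Nat.one_le_div_iff (by omega) |>.2 hgle_n,
    Nat.one_le_div_iff (by omega) |>.2 hgle_m, ?_, ?_⟩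
  · have : (q.take g).length = g := by rw [length_take]; omega
    intro hnil
    rw [hnil] at this
    simp at this
    omega
  · have hpern : HasPeriod (q.take n) g := hasPeriod_of_prefix (take_prefix _ _) hperg
    have hlenn : (q.take n).length = n := by rw [length_take]; omega
    have h := eq_powW_of_period hg (by rw [hlenn]; exact hgn) hpern
    rw [hlenn] at h
    rw [take_take (i := g) (j := n) (l := q), min_eq_left hgle_n] at h
    rw [hw1]; exact h
  · have hperm : HasPeriod (q.take m) g := hasPeriod_of_prefix (take_prefix _ _) hperg
    have hlenm : (q.take m).length = m := by rw [length_take]; omega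
    have h := eq_powW_of_period hg (by rw [hlenm]; exact hgm) hperm
    rw [hlenm] at h
    rw [take_take (i := g) (j := m) (l := q), min_eq_left hgle_m] at h
    rw [hw2]; exact h

/-- If a primitive word's power equals another word's power, the other word is a power
of the primitive one. -/
lemma primitive_dvd {c d : List β} {a b : ℕ} (hprim : Primitive c) (hc : c ≠ []) (hd : d ≠ [])
    (ha : 1 ≤ a) (hb : 1 ≤ b) (h : powW c a = powW d b) :
    ∃ j, 1 ≤ j ∧ d = powW c j := by
  rcases Nat.lt_or_ge a 2 with ha2 | ha2
  · -- a = 1 : c = powW d b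
    have ha1 : a = 1 := by omega
    subst ha1
    rw [powW_one] at h
    rcases Nat.lt_or_ge b 2 with hb2 | hb2
    · have : b = 1 := by omega
      subst this
      rw [powW_one] at h
      exact ⟨1, le_refl 1, by rw [powW_one, h]⟩
    · exact absurd h (hprim d b hb2)
  rcases Nat.lt_or_ge b 2 with hb2 | hb2
  · have : b = 1 := by omega
    subst this
    rw [powW_one] at h
    exact ⟨a, by omega, h.symm⟩
  -- both a, b ≥ 2
  have hcl : 1 ≤ c.length := length_pos_iff.2 hc
  have hdl : 1 ≤ d.length := length_pos_iff.2 hd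
  have hlen : (powW c a).length = a * c.length := length_powW _ _
  have hlen2 : (powW c a).length = b * d.length := by rw [h]; exact length_powW _ _
  have hge1 : 2 * c.length ≤ (powW c a).length := by rw [hlen]; nlinarith
  have hge2 : 2 * d.length ≤ (powW c a).length := by rw [hlen2]; nlinarith
  have hlong : c.length + d.length ≤ (powW c a).length := by omega
  have hpref2 : powW c a <+: powW d b := by rw [← h]
  obtain ⟨z, hz, i, j, hi, hj, hci, hdj⟩ :=
    common_root hc hd (prefix_refl (powW c a)) hpref2 hlong
  have hi1 : i = 1 := by
    by_contra hi1
    exact hprim z i (by omega) hci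
  subst hi1
  rw [powW_one] at hci
  exact ⟨j, hj, by rw [hdj, hci]⟩
end Words
section Group
variable {α : Type*} [DecidableEq α]
open FreeGroup

/-- Non-cancellation of adjacent letters. -/
def NC : (α × Bool) → (α × Bool) → Prop := fun x y => ¬(x.1 = y.1 ∧ x.2 = !y.2)

lemma chain'_reduce (L : List (α × Bool)) : List.Chain' NC (reduce L) := by
  induction L with
  | nil => simp [List.Chain']
  | cons x L ih =>
    rw [reduce.cons]
    cases h : reduce L with
    | nil => simp [List.Chain', List.isChain_singleton]
    | cons y t =>
      rw [h] at ih
      show List.Chain' NC (if x.1 = y.1 ∧ x.2 = !y.2 then t else x :: y :: t)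
      by_cases hc : x.1 = y.1 ∧ x.2 = !y.2
      · rw [if_pos hc]; exact ih.tail
      · rw [if_neg hc]
        exact List.isChain_cons_cons.2 ⟨hc, ih⟩

lemma reduce_eq_self_of_chain' : ∀ {L : List (α × Bool)}, List.Chain' NC L → reduce L = L := by
  intro L
  induction L with
  | nil => simp
  | cons x L ih =>
    intro h
    rw [reduce.cons, ih h.tail]
    cases L with
    | nil => rfl
    | cons y t =>
      have hnc : NC x y := (List.isChain_cons_cons.1 h).1
      show (if x.1 = y.1 ∧ x.2 = !y.2 then t else x :: y :: t) = x :: y :: t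
      rw [if_neg hnc]

lemma chain'_toWord (g : FreeGroup α) : List.Chain' NC g.toWord := by
  rw [← reduce_toWord g]; exact chain'_reduce _

lemma toWord_mk_eq {L : List (α × Bool)} (h : List.Chain' NC L) : (mk L).toWord = L := by
  rw [toWord_mk, reduce_eq_self_of_chain' h]

lemma mk_powW (c : List (α × Bool)) (n : ℕ) : mk (powW c n) = (mk c) ^ n := by
  induction n with
  | zero => rw [powW_zero, pow_zero, one_eq_mk]
  | succ n ih => rw [powW_succ, ← mul_mk, ih, pow_succ']

lemma chain'_powW {w : List (α × Bool)} (h : List.Chain' NC (w ++ w)) (n : ℕ) :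
    List.Chain' NC (powW w n) := by
  rcases eq_or_ne w [] with rfl | hw
  · simp [List.Chain']
  · induction n with
    | zero => simp [List.Chain']
    | succ n ih =>
      rw [powW_succ]
      rcases Nat.eq_zero_or_pos n with rfl | hn
      · simpa [List.Chain'] using (List.isChain_append.1 h).1
      · refine List.isChain_append.2 ⟨(List.isChain_append.1 h).1, ih, ?_⟩
        rw [head?_powW w hn]
        exact (List.isChain_append.1 h).2.2

lemma chain'_double {u : FreeGroup α} (hc : CyclicallyReduced u) :
    List.Chain' NC (u.toWord ++ u.toWord) := by
  rw [← hc]; exact chain'_toWord _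

lemma toWord_pow {u : FreeGroup α} (hc : CyclicallyReduced u) (n : ℕ) :
    (u ^ n).toWord = powW u.toWord n := by
  have h : u ^ n = mk (powW u.toWord n) := by
    rw [mk_powW, mk_toWord]
  rw [h, toWord_mk_eq (chain'_powW (chain'_double hc) n)]

lemma cyclicallyReduced_mk {c : List (α × Bool)} (h : List.Chain' NC (c ++ c)) :
    CyclicallyReduced (mk c) := by
  have hc : List.Chain' NC c := h.prefix (prefix_append c c)
  rw [CyclicallyReduced, mul_mk, toWord_mk_eq h, toWord_mk_eq hc]

lemma invRev_cons (x : α × Bool) (l : List (α × Bool)) :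
    invRev (x :: l) = invRev l ++ [(x.1, !x.2)] := by
  simp [invRev]

lemma head?_sandwich {c : List (α × Bool)} (a r : List (α × Bool)) (hc : c ≠ []) {n : ℕ}
    (hn : 1 ≤ n) : (a ++ powW c n ++ r).head? = (a ++ c ++ r).head? := by
  simp only [List.head?_append, head?_powW c hn]

lemma getLast?_sandwich {c : List (α × Bool)} (a r : List (α × Bool)) (hc : c ≠ []) {n : ℕ}
    (hn : 1 ≤ n) : (a ++ powW c n ++ r).getLast? = (a ++ c ++ r).getLast? := by
  simp only [List.getLast?_append, getLast?_powW c hn]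

lemma chain'_congr_mid {x z : α × Bool} {L L' : List (α × Bool)} (hL' : List.Chain' NC L')
    (hhd : L'.head? = L.head?) (hlast : L'.getLast? = L.getLast?)
    (h : List.Chain' NC ([x] ++ L ++ [z])) : List.Chain' NC ([x] ++ L' ++ [z]) := by
  obtain ⟨hxL, hz, hlink2⟩ := List.isChain_append.1 h
  obtain ⟨hx, hL, hlink1⟩ := List.isChain_append.1 hxL
  have e : ([x] ++ L').getLast? = ([x] ++ L).getLast? := by
    rw [getLast?_append, getLast?_append, hlast]
  refine List.isChain_append.2 ⟨List.isChain_append.2 ⟨hx, hL', ?_⟩, hz, ?_⟩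
  · rw [hhd]; exact hlink1
  · rw [e]; exact hlink2

lemma power_form_aux : ∀ (N : ℕ) (g : FreeGroup α), g.toWord.length ≤ N → g ≠ 1 →
    ∃ a c : List (α × Bool), c ≠ [] ∧ g.toWord = a ++ c ++ invRev a ∧
      ∀ n, 1 ≤ n → (g ^ n).toWord = a ++ powW c n ++ invRev a := by
  intro N
  induction N with
  | zero =>
    intro g hN hg
    exfalso
    apply hg
    apply toWord_eq_nil_iff.1
    cases h : g.toWord with
    | nil => rfl
    | cons u v => rw [h] at hN; simp at hN
  | succ N ih =>
    intro g hN hg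
    have hw : List.Chain' NC g.toWord := chain'_toWord g
    have hwne : g.toWord ≠ [] := fun h => hg (toWord_eq_nil_iff.1 h)
    by_cases hcyc : List.Chain' NC (g.toWord ++ g.toWord)
    · refine ⟨[], g.toWord, hwne, by simp [invRev], ?_⟩
      intro n hn
      have hcr : CyclicallyReduced g := by
        have hgg : (g * g).toWord = g.toWord ++ g.toWord := by
          conv_lhs => rw [← mk_toWord (x := g)]
          rw [mul_mk, toWord_mk_eq hcyc]
        exact hgg
      rw [toWord_pow hcr n]
      simp [invRev]
    · -- extract first letter yh and last letter xl = inverse of yh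
      have hlinkfail : ¬ (∀ p ∈ g.toWord.getLast?, ∀ y ∈ g.toWord.head?, NC p y) := by
        intro hl; exact hcyc (List.isChain_append.2 ⟨hw, hw, hl⟩)
      push_neg at hlinkfail
      obtain ⟨xl, hxl, yh, hyh, hnc⟩ := hlinkfail
      have hcanc : xl.1 = yh.1 ∧ xl.2 = !yh.2 := not_not.1 hnc
      have hxleq : xl = (yh.1, !yh.2) := Prod.ext hcanc.1 hcanc.2
      obtain ⟨t, hwt⟩ : ∃ t, g.toWord = yh :: t := by
        cases h : g.toWord with
        | nil => exact absurd h hwne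
        | cons y0 t =>
          rw [h] at hyh
          simp only [head?_cons, Option.mem_def, Option.some_inj] at hyh
          exact ⟨t, by rw [hyh]⟩
      cases t with
      | nil =>
        exfalso
        rw [hwt] at hxl
        simp only [getLast?_singleton, Option.mem_def, Option.some_inj] at hxl
        rw [← hxl] at hxleq
        have := congrArg Prod.snd hxleq
        simp at this
      | cons b t' =>
        have htne : (b :: t') ≠ [] := by simp
        have hxlget : (b :: t').getLast? = some xl := by
          rw [hwt, getLast?_cons_cons] at hxl
          exact hxl
        -- decompose the tail as mid ++ [xl]
        have hmid : b :: t' = (b :: t').dropLast ++ [xl] := by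
          conv_lhs => rw [← dropLast_append_getLast htne]
          rw [getLast?_eq_getLast htne] at hxlget
          rw [Option.some_inj.1 hxlget]
        set mid := (b :: t').dropLast with hmiddef
        have hwdecomp : g.toWord = [yh] ++ mid ++ [xl] := by
          rw [hwt]
          conv_lhs => rw [hmid]
          simp
        -- mid is nonempty
        have hmidne : mid ≠ [] := by
          intro hnil
          rw [hnil] at hwdecomp
          simp only [List.append_nil, List.nil_append] at hwdecomp
          rw [hwdecomp] at hw
          have hnc2 : NC yh xl := (List.isChain_cons_cons.1 hw).1
          exact hnc2 ⟨hcanc.1.symm, by rw [hcanc.2]; simp⟩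
        have hchmid : List.Chain' NC mid :=
          hw.infix ⟨[yh], [xl], by rw [hwdecomp]⟩
        have hmidtoWord : (mk mid).toWord = mid := toWord_mk_eq hchmid
        have hmidlen : mid.length + 2 = g.toWord.length := by
          rw [hwdecomp]; simp
        have hmkne : mk mid ≠ 1 := by
          intro h1
          have := toWord_eq_nil_iff.2 h1
          rw [hmidtoWord] at this
          exact hmidne this
        obtain ⟨a', c, hcne, hform, hpow'⟩ :=
          ih (mk mid) (by rw [hmidtoWord]; omega) hmkne
        rw [hmidtoWord] at hform
        -- g = mk [yh] * mk mid * (mk [yh])⁻¹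
        have hinvyh : invRev [yh] = [xl] := by
          rw [hxleq]; simp [invRev]
        have hgdecomp : g = mk [yh] * mk mid * (mk [yh])⁻¹ := by
          rw [inv_mk, hinvyh, mul_mk, mul_mk, ← mk_toWord (x := g), hwdecomp]
        have hgpow : ∀ n : ℕ, 1 ≤ n →
            (g ^ n).toWord = [yh] ++ ((mk mid) ^ n).toWord ++ [xl] := by
          intro n hn
          have hpown : g ^ n = mk ([yh] ++ ((mk mid) ^ n).toWord ++ [xl]) := by
            conv_lhs => rw [hgdecomp, conj_pow]
            conv_lhs => rw [← mk_toWord (x := (mk mid) ^ n)]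
            rw [inv_mk, hinvyh, mul_mk, mul_mk]
          rw [hpown]
          apply toWord_mk_eq
          refine chain'_congr_mid (L := mid) (chain'_toWord _) ?_ ?_ ?_
          · rw [hpow' n hn, hform, head?_sandwich a' (invRev a') hcne hn]
          · rw [hpow' n hn, hform, getLast?_sandwich a' (invRev a') hcne hn]
          · rw [← hwdecomp]; exact hw
        refine ⟨yh :: a', c, hcne, ?_, ?_⟩
        · rw [hwdecomp, hform, invRev_cons, ← hxleq]
          simp
        · intro n hn
          rw [hgpow n hn, hpow' n hn, invRev_cons, ← hxleq]
          simp
lemma power_form (g : FreeGroup α) (hg : g ≠ 1) :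
    ∃ a c : List (α × Bool), c ≠ [] ∧ g.toWord = a ++ c ++ invRev a ∧
      ∀ n, 1 ≤ n → (g ^ n).toWord = a ++ powW c n ++ invRev a :=
  power_form_aux g.toWord.length g le_rfl hg

lemma rootFree_of_primitive {c : List (α × Bool)} (hprim : Primitive c) (hcne : c ≠ [])
    (hch : List.Chain' NC (c ++ c)) : RootFree (mk c) := by
  have hctW : (mk c).toWord = c := toWord_mk_eq (hch.prefix (prefix_append c c))
  have main : ∀ (y : FreeGroup α) (m : ℕ), 2 ≤ m → mk c ≠ y ^ m := by
    intro y m hm hy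
    have hyne : y ≠ 1 := by
      rintro rfl
      rw [one_pow] at hy
      have := congrArg toWord hy
      rw [hctW, toWord_one] at this
      exact hcne this
    obtain ⟨a, d, hdne, hform, hpow⟩ := power_form y hyne
    have hcw : (y ^ m).toWord = a ++ powW d m ++ invRev a := hpow m (by omega)
    have hcc : c = a ++ powW d m ++ invRev a := by
      rw [← hctW, hy, hcw]
    cases a with
    | nil =>
      simp only [invRev_empty, List.append_nil, List.nil_append] at hcc
      exact hprim d m hm hcc
    | cons x0 a' =>
      have hhd : c.head? = some x0 := by rw [hcc]; simp
      have hlast : c.getLast? = some (x0.1, !x0.2) := by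
        rw [hcc, invRev_cons]
        rw [show (x0 :: a') ++ powW d m ++ (invRev a' ++ [(x0.1, !x0.2)])
            = ((x0 :: a') ++ powW d m ++ invRev a') ++ [(x0.1, !x0.2)] by simp]
        exact getLast?_concat
      have hlink := (List.isChain_append.1 hch).2.2
      have := hlink _ (by rw [hlast]; rfl) _ (by rw [hhd]; rfl)
      exact this ⟨rfl, by simp⟩
  intro x s hs heq
  rw [Int.abs_eq_natAbs] at hs
  rcases le_or_gt 0 s with hs0 | hs0
  · have hsn : s = (s.toNat : ℤ) := (Int.toNat_of_nonneg hs0).symm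
    rw [hsn, zpow_natCast] at heq
    exact main x s.toNat (by omega) heq
  · have hx : x ^ s = (x⁻¹) ^ ((-s).toNat) := by
      rw [← zpow_natCast, Int.toNat_of_nonneg (by omega), zpow_neg, inv_zpow, inv_inv]
    rw [hx] at heq
    exact main x⁻¹ (-s).toNat (by omega) heq

end Group

/-- Lyndon–Schützenberger: if powers of two nontrivial cyclically reduced
elements `u₁, u₂` share an initial segment of length at least `|u₁| + |u₂|`, then `u₁` and
`u₂` are positive powers of a unique common root-free cyclically reduced element `u₀`. -/
theorem stmt19 {α : Type*} [DecidableEq α] (u₁ u₂ : FreeGroup α)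
    (h1 : u₁ ≠ 1) (h2 : u₂ ≠ 1)
    (hc1 : CyclicallyReduced u₁) (hc2 : CyclicallyReduced u₂)
    (k t : ℕ) (hk : 1 ≤ k) (ht : 1 ≤ t)
    (p : List (α × Bool))
    (hlen : u₁.toWord.length + u₂.toWord.length ≤ p.length)
    (hp1 : p <+: (u₁ ^ k).toWord) (hp2 : p <+: (u₂ ^ t).toWord) :
    ∃! u₀ : FreeGroup α, RootFree u₀ ∧ CyclicallyReduced u₀ ∧
      ∃ r s : ℕ, 1 ≤ r ∧ 1 ≤ s ∧ u₁ = u₀ ^ r ∧ u₂ = u₀ ^ s := by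
  rw [toWord_pow hc1 k] at hp1
  rw [toWord_pow hc2 t] at hp2
  have h₁ : u₁.toWord ≠ [] := fun h => h1 (FreeGroup.toWord_eq_nil_iff.1 h)
  have h₂ : u₂.toWord ≠ [] := fun h => h2 (FreeGroup.toWord_eq_nil_iff.1 h)
  obtain ⟨z, hz, a, b, ha, hb, hw1z, hw2z⟩ := common_root h₁ h₂ hp1 hp2 hlen
  obtain ⟨c, e, hprim, hcne, he, hzc⟩ := exists_primitive hz
  have hu1 : u₁.toWord = powW c (e * a) := by rw [hw1z, hzc, ← powW_powW]
  have hu2 : u₂.toWord = powW c (e * b) := by rw [hw2z, hzc, ← powW_powW]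
  have hea : 1 ≤ e * a := Nat.mul_pos he ha
  have heb : 1 ≤ e * b := Nat.mul_pos he hb
  have hccch : List.Chain' NC (c ++ c) := by
    have hdbl : List.Chain' NC (u₁.toWord ++ u₁.toWord) := chain'_double hc1
    refine hdbl.prefix ?_
    have hpw : powW c 2 <+: powW c (e * a + e * a) := powW_prefix c (by omega)
    rw [powW_add, ← hu1] at hpw
    have h2 : powW c 2 = c ++ c := by rw [powW_succ, powW_one]
    rwa [h2] at hpw
  have hu0tW : (FreeGroup.mk c).toWord = c :=
    toWord_mk_eq (hccch.prefix (List.prefix_append c c))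
  have hcr0 : CyclicallyReduced (FreeGroup.mk c) := cyclicallyReduced_mk hccch
  have hrf0 : RootFree (FreeGroup.mk c) := rootFree_of_primitive hprim hcne hccch
  have hu1e : u₁ = (FreeGroup.mk c) ^ (e * a) := by
    rw [← FreeGroup.mk_toWord (x := u₁), hu1, mk_powW]
  have hu2e : u₂ = (FreeGroup.mk c) ^ (e * b) := by
    rw [← FreeGroup.mk_toWord (x := u₂), hu2, mk_powW]
  refine ⟨FreeGroup.mk c, ⟨hrf0, hcr0, e * a, e * b, hea, heb, hu1e, hu2e⟩, ?_⟩
  rintro u' ⟨hrf', hcr', r', s', hr', hs', hu1', hu2'⟩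
  have hu'ne : u' ≠ 1 := by
    rintro rfl
    rw [one_pow] at hu1'
    exact h1 hu1'
  have hu'w : u'.toWord ≠ [] := fun h => hu'ne (FreeGroup.toWord_eq_nil_iff.1 h)
  have hweq : powW c (e * a) = powW u'.toWord r' := by
    rw [← hu1, hu1', toWord_pow hcr' r']
  obtain ⟨j, hj, hj2⟩ := primitive_dvd hprim hcne hu'w hea hr' hweq
  have hu'j : u' = (FreeGroup.mk c) ^ j := by
    rw [← FreeGroup.mk_toWord (x := u'), hj2, mk_powW]
  rcases Nat.lt_or_ge j 2 with hj2' | hj2'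
  · have : j = 1 := by omega
    rw [this, pow_one] at hu'j
    exact hu'j
  · exfalso
    refine hrf' (FreeGroup.mk c) (j : ℤ) ?_ ?_
    · rw [Int.abs_eq_natAbs]
      simp only [Int.natAbs_natCast]
      exact_mod_cast hj2'
    · rw [hu'j, zpow_natCast]

end PurelyLoxGen
end
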